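/- Let (C; ≤₀, ≤₁) be a compatible finite 2-preorder, and let A, B be disjoint ≤₁-downward-closed subsets of C. Then A and B are separated by a set belonging to the Boolean algebra generated by the ≤₀-upward-closed sets. -/
import Mathlib


/-- Membership in the Boolean algebra generated by a family of sets. -/
inductive BoolGen {C : Type*} (G : Set C → Prop) : Set C → Prop
  | basic {s : Set C} : G s → BoolGen G s
  | compl {s : Set C} : BoolGen G s → BoolGen G sᶜ
  | union {s t : Set C} : BoolGen G s → BoolGen G t → BoolGen G (s ∪ t)
  | inter {s t : Set C} : BoolGen G s → BoolGen G t → BoolGen G (s ∩ t)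

/-- In a compatible finite 2-preorder `(C; ≤₀, ≤₁)`, any two disjoint
`≤₁`-downward-closed sets are separated by a set from the Boolean algebra
generated by the `≤₀`-upward-closed sets. -/
theorem stmt10 {C : Type*} [Finite C] (le0 le1 : C → C → Prop)
    (h0refl : ∀ x, le0 x x) (h0trans : ∀ x y z, le0 x y → le0 y z → le0 x z)
    (h1refl : ∀ x, le1 x x) (h1trans : ∀ x y z, le1 x y → le1 y z → le1 x z)
    (h2pre : ∀ x y, le1 x y → le0 x y ∧ le0 y x)
    (hcompat : ∀ a b, le0 a b → le0 b a → ∃ c, le1 c a ∧ le1 c b)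
    (A B : Set C)
    (hA : ∀ x y, le1 x y → y ∈ A → x ∈ A)
    (hB : ∀ x y, le1 x y → y ∈ B → x ∈ B)
    (hdisj : A ∩ B = ∅) :
    ∃ S : Set C, BoolGen (fun U => ∀ x y, x ∈ U → le0 x y → y ∈ U) S ∧
      A ⊆ S ∧ S ∩ B = ∅ := by
  classical
  set G : Set C → Prop := fun U => ∀ x y, x ∈ U → le0 x y → y ∈ U with hG
  -- the ≡₀-class of a is in the Boolean algebra
  have hclass : ∀ a : C, BoolGen G {x | le0 a x ∧ le0 x a} := by
    intro a
    have h1 : BoolGen G {x | le0 a x} :=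
      BoolGen.basic (fun x y hx hxy => h0trans a x y hx hxy)
    have h2 : BoolGen G {x | ¬ le0 x a} :=
      BoolGen.basic (fun x y hx hxy hya => hx (h0trans x y a hxy hya))
    have h3 : BoolGen G {x | ¬ le0 x a}ᶜ := BoolGen.compl h2
    have : {x | le0 a x ∧ le0 x a} = {x | le0 a x} ∩ {x | ¬ le0 x a}ᶜ := by
      ext x; simp [Set.mem_compl_iff]
    rw [this]
    exact BoolGen.inter h1 h3
  -- finite unions of classes
  have hunion : ∀ t : Finset C, BoolGen G (⋃ a ∈ t, {x | le0 a x ∧ le0 x a}) := by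
    intro t
    induction t using Finset.induction_on with
    | empty =>
        have : (⋃ a ∈ (∅ : Finset C), {x | le0 a x ∧ le0 x a}) = ∅ := by simp
        rw [this]
        exact BoolGen.basic (fun x y hx _ => hx.elim)
    | @insert a s ha ih =>
        have : (⋃ b ∈ insert a s, {x | le0 b x ∧ le0 x b})
            = {x | le0 a x ∧ le0 x a} ∪ ⋃ b ∈ s, {x | le0 b x ∧ le0 x b} := by
          simp [Set.biUnion_insert]
        rw [this]
        exact BoolGen.union (hclass a) ih
  have hAfin : A.Finite := Set.toFinite A
  refine ⟨⋃ a ∈ hAfin.toFinset, {x | le0 a x ∧ le0 x a}, hunion _, ?_, ?_⟩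
  · intro a haA
    apply Set.mem_biUnion (hAfin.mem_toFinset.mpr haA)
    exact ⟨h0refl a, h0refl a⟩
  · ext x
    simp only [Set.mem_inter_iff, Set.mem_iUnion, Set.mem_empty_iff_false, iff_false]
    rintro ⟨⟨a, haA, hax, hxa⟩, hxB⟩
    have haA' : a ∈ A := hAfin.mem_toFinset.mp haA
    obtain ⟨c, hc1, hc2⟩ := hcompat a x hax hxa
    have : c ∈ A ∩ B := ⟨hA c a hc1 haA', hB c x hc2 hxB⟩
    rw [hdisj] at this
    exact this
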